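/- Let 0 < a < b be reals, α ∈ (0,1), n a positive integer, ΔT = ln(b/a)/n, and for k ∈ {0,1,…,n} set t_k = a·exp(k·ΔT). Let x : [a,b] → ℝ be of class C², and set M₁ = max_{τ∈[a,b]} |x'(τ)|, M₂ = max_{τ∈[a,b]} |x''(τ)|. Then for every N ∈ {1,…,n}, the discretization error satisfies | ₐD_{t_N}^α x − (x(a)/Γ(1−α))·(ln(t_N/a))^{−α} − ψ·∑_{k=1}^{N} ω_{N−k+1}^α · ((x(t_k) − x(t_{k−1}))/exp(k·ΔT))·t_k | ≤ ((M₁ + (3/2)·M₂·b)/Γ(2−α))·(b−a)·(ΔT)^{1−α}, where ψ = (ΔT)^{1−α}/(a·(1−exp(−ΔT))·Γ(2−α)) and ω_k^α = k^{1−α} − (k−1)^{1−α}. -/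

import Mathlib

open Real Set intervalIntegral

open MeasureTheory

set_option maxHeartbeats 1000000

private lemma log_lower {T τ : ℝ} (hτ : 0 < τ) (hτT : τ ≤ T) :
    (T - τ) / T ≤ Real.log (T / τ) := by
  have hT : 0 < T := lt_of_lt_of_le hτ hτT
  have h := Real.log_le_sub_one_of_pos (show 0 < τ / T by positivity)
  have hlog : Real.log (T / τ) = - Real.log (τ / T) := by
    rw [← Real.log_inv]
    congr 1
    field_simp
  have h2 : (T - τ) / T = 1 - τ / T := by field_simp
  rw [hlog, h2]
  linarith

private lemma wIntegrable {T c d α : ℝ} (hα0 : 0 < α) (hα1 : α < 1)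
    (hc : 0 < c) (hcd : c ≤ d) (hdT : d ≤ T) :
    IntervalIntegrable (fun τ => Real.log (T / τ) ^ (-α)) volume c d := by
  have hT : 0 < T := lt_of_lt_of_le (lt_of_lt_of_le hc hcd) hdT
  have hg : IntervalIntegrable (fun τ => T ^ α * (T - τ) ^ (-α)) volume c d := by
    have h1 : IntervalIntegrable (fun s : ℝ => s ^ (-α)) volume (T - c) (T - d) :=
      intervalIntegrable_rpow' (by linarith)
    have h2 := h1.comp_sub_left T
    simp only [sub_sub_cancel] at h2
    exact h2.const_mul (T ^ α)
  rw [intervalIntegrable_iff_integrableOn_Ioc_of_le hcd] at hg ⊢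
  refine MeasureTheory.Integrable.mono hg ?_ ?_
  · exact ((Real.measurable_log.comp (measurable_const.div measurable_id)).pow
      measurable_const).aestronglyMeasurable
  · rw [ae_restrict_iff' measurableSet_Ioc]
    refine Filter.Eventually.of_forall fun τ hτ => ?_
    have hτ0 : 0 < τ := lt_trans hc hτ.1
    have hτT : τ ≤ T := le_trans hτ.2 hdT
    have hwnn : 0 ≤ Real.log (T / τ) ^ (-α) :=
      Real.rpow_nonneg (Real.log_nonneg ((one_le_div hτ0).2 hτT)) _
    rcases eq_or_lt_of_le hτT with h | h
    · subst h
      simp [Real.zero_rpow (neg_ne_zero.2 (ne_of_gt hα0)), div_self (ne_of_gt hτ0)]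
    · have hsub : 0 < (T - τ) / T := div_pos (by linarith) hT
      have key : Real.log (T / τ) ^ (-α) ≤ ((T - τ) / T) ^ (-α) :=
        Real.rpow_le_rpow_of_nonpos hsub (log_lower hτ0 hτT) (by linarith)
      have heq : ((T - τ) / T) ^ (-α) = T ^ α * (T - τ) ^ (-α) := by
        rw [Real.div_rpow (by linarith) hT.le, Real.rpow_neg hT.le]
        field_simp
      rw [Real.norm_eq_abs, Real.norm_eq_abs, abs_of_nonneg hwnn, abs_of_nonneg (mul_nonneg (Real.rpow_nonneg hT.le _) (Real.rpow_nonneg (by linarith) _))]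
      rw [heq] at key
      exact key

private lemma wIntegral_eq {T c d α : ℝ} (hα0 : 0 < α) (hα1 : α < 1)
    (hc : 0 < c) (hcd : c ≤ d) (hdT : d ≤ T) :
    ∫ τ in c..d, Real.log (T / τ) ^ (-α) / τ
      = (Real.log (T / c) ^ (1 - α) - Real.log (T / d) ^ (1 - α)) / (1 - α) := by
  have hT : 0 < T := lt_of_lt_of_le (lt_of_lt_of_le hc hcd) hdT
  have h1α : (0:ℝ) < 1 - α := by linarith
  have hF : ∫ τ in c..d, Real.log (T / τ) ^ (-α) / τ
      = (fun τ => -(Real.log (T / τ) ^ (1 - α)) / (1 - α)) d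
        - (fun τ => -(Real.log (T / τ) ^ (1 - α)) / (1 - α)) c := by
    apply intervalIntegral.integral_eq_sub_of_hasDeriv_right_of_le hcd
    · intro τ hτ
      have hτ0 : 0 < τ := lt_of_lt_of_le hc hτ.1
      have h1 : ContinuousAt (fun τ => Real.log (T / τ)) τ :=
        (Real.continuousAt_log (by positivity)).comp
          (continuousAt_const.div continuousAt_id (ne_of_gt hτ0))
      have h2 : ContinuousAt (fun τ => Real.log (T / τ) ^ (1 - α)) τ :=
        h1.rpow_const (Or.inr (by linarith))
      exact (h2.neg.div_const (1 - α)).continuousWithinAt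
    · intro τ hτ
      have hτ0 : 0 < τ := lt_trans hc hτ.1
      have hbase : 0 < Real.log (T / τ) :=
        Real.log_pos ((one_lt_div hτ0).2 (lt_of_lt_of_le hτ.2 hdT))
      have hlog : HasDerivAt (fun u : ℝ => Real.log (T / u)) (-τ⁻¹) τ := by
        have h : HasDerivAt (fun u : ℝ => Real.log T - Real.log u) (0 - τ⁻¹) τ :=
          (hasDerivAt_const τ (Real.log T)).sub (Real.hasDerivAt_log (ne_of_gt hτ0))
        have h' : HasDerivAt (fun u : ℝ => Real.log T - Real.log u) (-τ⁻¹) τ := by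
          simpa using h
        refine h'.congr_of_eventuallyEq ?_
        filter_upwards [eventually_gt_nhds hτ0] with u hu
        rw [Real.log_div (ne_of_gt hT) (ne_of_gt hu)]
      have hrpow : HasDerivAt (fun y : ℝ => y ^ (1 - α))
          ((1 - α) * Real.log (T / τ) ^ (1 - α - 1)) (Real.log (T / τ)) :=
        Real.hasDerivAt_rpow_const (Or.inl (ne_of_gt hbase))
      have hcomp := ((hrpow.comp τ hlog).neg.div_const (1 - α))
      have heq : -((1 - α) * Real.log (T / τ) ^ (1 - α - 1) * -τ⁻¹) / (1 - α)
          = Real.log (T / τ) ^ (-α) / τ := by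
        rw [show (1:ℝ) - α - 1 = -α by ring]
        field_simp
      rw [heq] at hcomp
      exact hcomp.hasDerivWithinAt
    · have h := (wIntegrable hα0 hα1 hc hcd hdT).mul_continuousOn
        (g := fun τ => τ⁻¹) ?_
      · simpa [div_eq_mul_inv] using h
      · intro u hu
        rw [uIcc_of_le hcd] at hu
        exact (continuousAt_inv₀ (ne_of_gt (lt_of_lt_of_le hc hu.1))).continuousWithinAt
  rw [hF]
  ring

private lemma rpow_succ_sub_le_one {y p : ℝ} (hy : 0 ≤ y) (hp0 : 0 ≤ p) (hp1 : p ≤ 1) :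
    (y + 1) ^ p ≤ y ^ p + 1 := by
  have h := NNReal.rpow_add_le_add_rpow (Real.toNNReal y) 1 hp0 hp1
  have h2 := NNReal.coe_le_coe.2 h
  push_cast at h2
  rw [Real.coe_toNNReal y hy] at h2
  simpa using h2

/-- Error bound for the discretization of the left Hadamard fractional
derivative of a `C²` function `x` on `[a,b]`, on the logarithmic grid
`t_k = a·exp(k·ΔT)`, `ΔT = ln(b/a)/n`. -/
theorem hadamard_discretization_error_bound
    (a b α : ℝ) (ha : 0 < a) (hab : a < b) (hα : α ∈ Set.Ioo (0 : ℝ) 1)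
    (n : ℕ) (hn : 0 < n)
    (x x' x'' : ℝ → ℝ)
    (hx' : ∀ τ ∈ Set.Icc a b, HasDerivWithinAt x (x' τ) (Set.Icc a b) τ)
    (hx'' : ∀ τ ∈ Set.Icc a b, HasDerivWithinAt x' (x'' τ) (Set.Icc a b) τ)
    (hx''cont : ContinuousOn x'' (Set.Icc a b))
    (M₁ M₂ : ℝ)
    (hM₁ : IsGreatest ((fun τ => |x' τ|) '' Set.Icc a b) M₁)
    (hM₂ : IsGreatest ((fun τ => |x'' τ|) '' Set.Icc a b) M₂)
    (N : ℕ) (hN₁ : 1 ≤ N) (hNn : N ≤ n) :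
    let ΔT : ℝ := Real.log (b / a) / n
    let t : ℕ → ℝ := fun k => a * Real.exp (k * ΔT)
    let ψ : ℝ := ΔT ^ (1 - α) / (a * (1 - Real.exp (-ΔT)) * Real.Gamma (2 - α))
    let ω : ℕ → ℝ := fun k => (k : ℝ) ^ (1 - α) - ((k : ℝ) - 1) ^ (1 - α)
    -- the left Hadamard fractional derivative of `x` at `t_N`
    -- (representation for absolutely continuous functions)
    let D : ℝ := x a / Real.Gamma (1 - α) * Real.log (t N / a) ^ (-α)
      + (1 / Real.Gamma (1 - α)) * ∫ τ in a..(t N), Real.log (t N / τ) ^ (-α) * x' τ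
    |D - x a / Real.Gamma (1 - α) * Real.log (t N / a) ^ (-α)
        - ψ * ∑ k ∈ Finset.Icc 1 N,
            ω (N - k + 1) * ((x (t k) - x (t (k - 1))) / Real.exp (k * ΔT)) * t k|
      ≤ (M₁ + (3 / 2) * M₂ * b) / Real.Gamma (2 - α) * (b - a) * ΔT ^ (1 - α) := by
  intro ΔT t ψ ω D
  obtain ⟨hα0, hα1⟩ := hα
  have h1α : (0:ℝ) < 1 - α := by linarith
  have hb : 0 < b := ha.trans hab
  have hba : 1 < b / a := (one_lt_div ha).2 hab
  have hlogba : 0 < Real.log (b / a) := Real.log_pos hba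
  have hnR : (0:ℝ) < n := Nat.cast_pos.2 hn
  have hΔT : 0 < ΔT := div_pos hlogba hnR
  have hΓ1 : 0 < Real.Gamma (1 - α) := Real.Gamma_pos_of_pos h1α
  have hΓ2 : 0 < Real.Gamma (2 - α) := Real.Gamma_pos_of_pos (by linarith)
  have hΓeq : Real.Gamma (2 - α) = (1 - α) * Real.Gamma (1 - α) := by
    rw [show (2:ℝ) - α = (1 - α) + 1 by ring, Real.Gamma_add_one (by linarith)]
  have htpos : ∀ k : ℕ, 0 < t k := fun k => mul_pos ha (Real.exp_pos _)
  have ht0 : t 0 = a := by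
    show a * Real.exp ((0:ℕ) * ΔT) = a
    norm_num
  have htmono : ∀ {j k : ℕ}, j ≤ k → t j ≤ t k := by
    intro j k hjk
    exact mul_le_mul_of_nonneg_left
      (Real.exp_le_exp.2 (mul_le_mul_of_nonneg_right (Nat.cast_le.2 hjk) hΔT.le)) ha.le
  have htlt : ∀ {j k : ℕ}, j < k → t j < t k := by
    intro j k hjk
    exact mul_lt_mul_of_pos_left
      (Real.exp_lt_exp.2 (mul_lt_mul_of_pos_right (Nat.cast_lt.2 hjk) hΔT)) ha
  have htn : t n = b := by
    show a * Real.exp (n * (Real.log (b / a) / n)) = b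
    rw [mul_comm (n:ℝ), div_mul_cancel₀ _ (ne_of_gt hnR), Real.exp_log (by positivity)]
    field_simp
  have hta : ∀ k : ℕ, a ≤ t k := by
    intro k
    have := htmono (Nat.zero_le k)
    rwa [ht0] at this
  have htb : ∀ {k : ℕ}, k ≤ n → t k ≤ b := by
    intro k hk
    have := htmono hk
    rwa [htn] at this
  have he : 0 < 1 - Real.exp (-ΔT) := by
    have : Real.exp (-ΔT) < 1 := by rw [Real.exp_lt_one_iff]; linarith
    linarith
  have hx'cont : ContinuousOn x' (Set.Icc a b) := fun τ hτ => (hx'' τ hτ).continuousWithinAt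
  have hM1 : ∀ τ ∈ Set.Icc a b, |x' τ| ≤ M₁ := fun τ hτ => hM₁.2 ⟨τ, hτ, rfl⟩
  have hM2 : ∀ τ ∈ Set.Icc a b, |x'' τ| ≤ M₂ := fun τ hτ => hM₂.2 ⟨τ, hτ, rfl⟩
  have hM1n : 0 ≤ M₁ := le_trans (abs_nonneg _) (hM1 a ⟨le_refl a, hab.le⟩)
  have hM2n : 0 ≤ M₂ := le_trans (abs_nonneg _) (hM2 a ⟨le_refl a, hab.le⟩)
  have hx'lip : ∀ u ∈ Set.Icc a b, ∀ v ∈ Set.Icc a b, |x' u - x' v| ≤ M₂ * |u - v| := by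
    intro u hu v hv
    have := (convex_Icc a b).norm_image_sub_le_of_norm_hasDerivWithin_le hx''
      (fun y hy => by rw [Real.norm_eq_abs]; exact hM2 y hy) hv hu
    simpa [Real.norm_eq_abs] using this
  -- integrability of the weight on each subinterval
  have hwint : ∀ k : ℕ, k ≤ N →
      IntervalIntegrable (fun τ => Real.log (t N / τ) ^ (-α)) volume (t (k-1)) (t k) :=
    fun k hk => wIntegrable hα0 hα1 (htpos _) (htmono (Nat.sub_le k 1)) (htmono hk)
  have hwodiv : ∀ k : ℕ, k ≤ N →
      IntervalIntegrable (fun τ => Real.log (t N / τ) ^ (-α) / τ) volume (t (k-1)) (t k) := by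
    intro k hk
    have h := (hwint k hk).mul_continuousOn (g := fun τ => τ⁻¹) ?_
    · simpa [div_eq_mul_inv] using h
    · intro u hu
      rw [uIcc_of_le (htmono (Nat.sub_le k 1))] at hu
      have : 0 < u := lt_of_lt_of_le (lt_of_lt_of_le ha (hta _)) hu.1
      exact (continuousAt_inv₀ (ne_of_gt this)).continuousWithinAt
  have hJint : ∀ k : ℕ, k ≤ N →
      IntervalIntegrable (fun τ => Real.log (t N / τ) ^ (-α) * x' τ) volume (t (k-1)) (t k) := by
    intro k hk
    refine (hwint k hk).mul_continuousOn ?_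
    apply hx'cont.mono
    rw [uIcc_of_le (htmono (Nat.sub_le k 1))]
    exact Set.Icc_subset_Icc (hta _) (htb (le_trans hk hNn))
  -- exact value of ∫ w/τ on each subinterval
  have hAint : ∀ k : ℕ, 1 ≤ k → k ≤ N →
      (∫ τ in t (k-1)..t k, Real.log (t N / τ) ^ (-α) / τ)
        = ΔT ^ (1 - α) * (((N:ℝ) - k + 1) ^ (1 - α) - ((N:ℝ) - k) ^ (1 - α)) / (1 - α) := by
    intro k hk1 hkN
    rw [wIntegral_eq hα0 hα1 (htpos _) (htmono (Nat.sub_le k 1)) (htmono hkN)]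
    have hl1 : Real.log (t N / t (k-1)) = ((N:ℝ) - k + 1) * ΔT := by
      show Real.log ((a * Real.exp ((N:ℕ) * ΔT)) / (a * Real.exp ((↑(k-1):ℝ) * ΔT))) = _
      rw [mul_div_mul_left _ _ (ne_of_gt ha), ← Real.exp_sub, Real.log_exp,
        Nat.cast_sub hk1]
      push_cast
      ring
    have hl2 : Real.log (t N / t k) = ((N:ℝ) - k) * ΔT := by
      show Real.log ((a * Real.exp ((N:ℕ) * ΔT)) / (a * Real.exp ((k:ℕ) * ΔT))) = _
      rw [mul_div_mul_left _ _ (ne_of_gt ha), ← Real.exp_sub, Real.log_exp]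
      ring
    have hNk : (0:ℝ) ≤ (N:ℝ) - k := sub_nonneg.2 (Nat.cast_le.2 hkN)
    rw [hl1, hl2, Real.mul_rpow (by linarith) hΔT.le, Real.mul_rpow hNk hΔT.le]
    ring
  -- key per-interval estimate
  have hkey : ∀ k : ℕ, 1 ≤ k → k ≤ N →
      |(∫ τ in t (k-1)..t k, Real.log (t N / τ) ^ (-α) * x' τ)
        - ((x (t k) - x (t (k-1))) / (1 - Real.exp (-ΔT))) *
            ∫ τ in t (k-1)..t k, Real.log (t N / τ) ^ (-α) / τ|
      ≤ (M₁ + M₂ * b) * (t k - t (k-1)) * (ΔT ^ (1 - α) / (1 - α)) := by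
    intro k hk1 hkN
    set c : ℝ := (x (t k) - x (t (k-1))) / (1 - Real.exp (-ΔT)) with hc
    have hk0 : t (k-1) < t k := htlt (by omega)
    have hh0 : 0 < t k - t (k-1) := by linarith
    have hsub : Set.Icc (t (k-1)) (t k) ⊆ Set.Icc a b :=
      Set.Icc_subset_Icc (hta _) (htb (le_trans hkN hNn))
    have htkb : t k ≤ b := htb (le_trans hkN hNn)
    have hdiff : t k - t (k-1) = t k * (1 - Real.exp (-ΔT)) := by
      show a * Real.exp ((k:ℕ) * ΔT) - a * Real.exp ((↑(k-1):ℝ) * ΔT)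
        = a * Real.exp ((k:ℕ) * ΔT) * (1 - Real.exp (-ΔT))
      rw [Nat.cast_sub hk1]
      push_cast
      rw [show ((k:ℝ) - 1) * ΔT = (k:ℝ) * ΔT + -ΔT by ring, Real.exp_add]
      ring
    -- pointwise bound on the integrand
    have hpt : ∀ τ ∈ Set.Ioc (t (k-1)) (t k),
        |Real.log (t N / τ) ^ (-α) * x' τ - c * (Real.log (t N / τ) ^ (-α) / τ)|
          ≤ ((M₁ + M₂ * b) * (t k - t (k-1))) * (Real.log (t N / τ) ^ (-α) / τ) := by
      intro τ hτ
      have hτ0 : 0 < τ := lt_trans (htpos _) hτ.1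
      have hτab : τ ∈ Set.Icc a b := hsub ⟨hτ.1.le, hτ.2⟩
      have hτN : τ ≤ t N := le_trans hτ.2 (htmono hkN)
      have hw0 : 0 ≤ Real.log (t N / τ) ^ (-α) :=
        Real.rpow_nonneg (Real.log_nonneg ((one_le_div hτ0).2 hτN)) _
      have hsplit : Real.log (t N / τ) ^ (-α) * x' τ - c * (Real.log (t N / τ) ^ (-α) / τ)
          = (Real.log (t N / τ) ^ (-α) / τ) * (τ * x' τ - c) := by
        field_simp
      rw [hsplit, abs_mul, abs_of_nonneg (div_nonneg hw0 hτ0.le),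
        mul_comm ((M₁ + M₂ * b) * (t k - t (k-1)))]
      refine mul_le_mul_of_nonneg_left ?_ (div_nonneg hw0 hτ0.le)
      -- Taylor-type estimate
      have hφ : |(x (t k) - x (t (k-1))) - (t k - t (k-1)) * x' τ|
          ≤ (M₂ * (t k - t (k-1))) * (t k - t (k-1)) := by
        have hder : ∀ u ∈ Set.Icc (t (k-1)) (t k),
            HasDerivWithinAt (fun u => x u - u * x' τ) (x' u - x' τ)
              (Set.Icc (t (k-1)) (t k)) u := by
          intro u hu
          have h1 := (hx' u (hsub hu)).mono hsub
          have h2 := (hasDerivWithinAt_id u (Set.Icc (t (k-1)) (t k))).mul_const (x' τ)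
          have h3 := h1.sub h2
          rw [one_mul] at h3
          exact h3
        have hbd : ∀ u ∈ Set.Icc (t (k-1)) (t k),
            ‖x' u - x' τ‖ ≤ M₂ * (t k - t (k-1)) := by
          intro u hu
          rw [Real.norm_eq_abs]
          refine le_trans (hx'lip u (hsub hu) τ hτab) ?_
          refine mul_le_mul_of_nonneg_left ?_ hM2n
          rw [abs_le]
          constructor <;> [linarith [hu.1, hτ.2]; linarith [hu.2, hτ.1.le]]
        have hmvt := (convex_Icc (t (k-1)) (t k)).norm_image_sub_le_of_norm_hasDerivWithin_le
          hder hbd (Set.left_mem_Icc.2 hk0.le) (Set.right_mem_Icc.2 hk0.le)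
        rw [Real.norm_eq_abs, Real.norm_eq_abs, abs_of_pos hh0] at hmvt
        have heqa : (x (t k) - x (t (k-1))) - (t k - t (k-1)) * x' τ
            = (x (t k) - t k * x' τ) - (x (t (k-1)) - (t (k-1)) * x' τ) := by ring
        rw [heqa]
        exact hmvt
      have hc2 : |t k * x' τ - c| ≤ M₂ * b * (t k - t (k-1)) := by
        have hceq : t k * x' τ - c
            = ((t k - t (k-1)) * x' τ - (x (t k) - x (t (k-1)))) / (1 - Real.exp (-ΔT)) := by
          rw [hc]
          rw [hdiff]
          field_simp
        rw [hceq, abs_div, abs_of_pos he, div_le_iff₀ he, abs_sub_comm]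
        have h5 : M₂ * (t k - t (k-1)) * (t k - t (k-1)) ≤ M₂ * b * (t k - t (k-1)) * (1 - Real.exp (-ΔT)) := by
          have h6 : M₂ * (t k - t (k-1)) * (t k - t (k-1)) = M₂ * t k * (t k - t (k-1)) * (1 - Real.exp (-ΔT)) := by
            rw [hdiff]; ring
          rw [h6]
          have h7 : 0 ≤ M₂ * (t k - t (k-1)) * (1 - Real.exp (-ΔT)) :=
            mul_nonneg (mul_nonneg hM2n hh0.le) he.le
          nlinarith [h7, htkb]
        exact le_trans hφ h5
      have h4 : |τ - t k| ≤ t k - t (k-1) := by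
        rw [abs_le]
        constructor <;> [linarith [hτ.1.le]; linarith [hτ.2]]
      have hd : τ * x' τ - c = (τ - t k) * x' τ + (t k * x' τ - c) := by ring
      rw [hd]
      refine le_trans (abs_add_le _ _) ?_
      have h8 : |(τ - t k) * x' τ| ≤ (t k - t (k-1)) * M₁ := by
        rw [abs_mul]
        exact mul_le_mul h4 (hM1 τ hτab) (abs_nonneg _) hh0.le
      have := add_le_add h8 hc2
      calc |(τ - t k) * x' τ| + |t k * x' τ - c|
          ≤ (t k - t (k-1)) * M₁ + M₂ * b * (t k - t (k-1)) := this
        _ = (M₁ + M₂ * b) * (t k - t (k-1)) := by ring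
    -- now integrate the bound
    have hwodiv' := hwodiv k hkN
    have hfint := hJint k hkN
    have heq : (∫ τ in t (k-1)..t k,
          (Real.log (t N / τ) ^ (-α) * x' τ - c * (Real.log (t N / τ) ^ (-α) / τ)))
        = (∫ τ in t (k-1)..t k, Real.log (t N / τ) ^ (-α) * x' τ)
          - c * ∫ τ in t (k-1)..t k, Real.log (t N / τ) ^ (-α) / τ := by
      rw [intervalIntegral.integral_sub hfint (hwodiv'.const_mul c),
        intervalIntegral.integral_const_mul]
    rw [← heq]
    have hbound := intervalIntegral.norm_integral_le_abs_of_norm_le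
      (f := fun τ => Real.log (t N / τ) ^ (-α) * x' τ - c * (Real.log (t N / τ) ^ (-α) / τ))
      (g := fun τ => ((M₁ + M₂ * b) * (t k - t (k-1))) * (Real.log (t N / τ) ^ (-α) / τ))
      (μ := volume) (a := t (k-1)) (b := t k) ?_
      (hwodiv'.const_mul ((M₁ + M₂ * b) * (t k - t (k-1))))
    · rw [Real.norm_eq_abs] at hbound
      refine le_trans hbound ?_
      rw [intervalIntegral.integral_const_mul, hAint k hk1 hkN]
      have hNk : (0:ℝ) ≤ (N:ℝ) - k := sub_nonneg.2 (Nat.cast_le.2 hkN)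
      have hωle : ((N:ℝ) - k + 1) ^ (1 - α) - ((N:ℝ) - k) ^ (1 - α) ≤ 1 := by
        have := rpow_succ_sub_le_one (y := (N:ℝ) - k) (p := 1 - α) hNk (by linarith) (by linarith)
        linarith
      have hωnn : 0 ≤ ((N:ℝ) - k + 1) ^ (1 - α) - ((N:ℝ) - k) ^ (1 - α) :=
        sub_nonneg.2 (Real.rpow_le_rpow hNk (by linarith) (by linarith))
      have hP : 0 ≤ ΔT ^ (1 - α) := Real.rpow_nonneg hΔT.le _
      have hMM : 0 ≤ M₁ + M₂ * b := add_nonneg hM1n (mul_nonneg hM2n hb.le)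
      have hC : 0 ≤ (M₁ + M₂ * b) * (t k - t (k-1)) := mul_nonneg hMM hh0.le
      rw [abs_of_nonneg (mul_nonneg hC (div_nonneg (mul_nonneg hP hωnn) h1α.le))]
      refine mul_le_mul_of_nonneg_left ?_ hC
      rw [div_le_div_iff₀ h1α h1α]
      linarith [mul_le_mul_of_nonneg_right (mul_le_mul_of_nonneg_left hωle hP) h1α.le]
    · rw [Set.uIoc_of_le hk0.le, ae_restrict_iff' measurableSet_Ioc]
      refine Filter.Eventually.of_forall fun τ hτ => ?_
      rw [Real.norm_eq_abs]
      exact hpt τ hτ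
  -- splitting the main integral
  have hIsum : (∫ τ in a..(t N), Real.log (t N / τ) ^ (-α) * x' τ)
      = ∑ k ∈ Finset.Icc 1 N, ∫ τ in t (k-1)..t k, Real.log (t N / τ) ^ (-α) * x' τ := by
    have hadj : ∀ i : ℕ, i < N → IntervalIntegrable
        (fun τ => Real.log (t N / τ) ^ (-α) * x' τ) volume (t i) (t (i+1)) := by
      intro i hi
      have h := hJint (i+1) hi
      rwa [Nat.add_sub_cancel] at h
    have h := intervalIntegral.sum_integral_adjacent_intervals hadj
    rw [← Finset.Ico_add_one_right_eq_Icc, Finset.sum_Ico_eq_sum_range]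
    simp only [Nat.succ_sub_one, Nat.add_sub_cancel]
    rw [← ht0, ← h]
    refine Finset.sum_congr rfl fun i _ => ?_
    rw [show 1 + i - 1 = i from by omega, show 1 + i = i + 1 from by omega]
  -- rewriting the discrete sum
  have hSsum : ψ * (∑ k ∈ Finset.Icc 1 N,
        ω (N - k + 1) * ((x (t k) - x (t (k - 1))) / Real.exp (k * ΔT)) * t k)
      = (1 / Real.Gamma (1 - α)) * ∑ k ∈ Finset.Icc 1 N,
          ((x (t k) - x (t (k-1))) / (1 - Real.exp (-ΔT))) *
            ∫ τ in t (k-1)..t k, Real.log (t N / τ) ^ (-α) / τ := by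
    rw [Finset.mul_sum, Finset.mul_sum]
    refine Finset.sum_congr rfl fun k hk => ?_
    rw [Finset.mem_Icc] at hk
    have hcast : ((N - k + 1 : ℕ) : ℝ) = (N:ℝ) - k + 1 := by
      rw [show N - k + 1 = N + 1 - k from by omega, Nat.cast_sub (by omega)]
      push_cast
      ring
    show ΔT ^ (1 - α) / (a * (1 - Real.exp (-ΔT)) * Real.Gamma (2 - α)) *
        ((((N - k + 1 : ℕ) : ℝ) ^ (1 - α) - (((N - k + 1 : ℕ) : ℝ) - 1) ^ (1 - α)) *
          ((x (t k) - x (t (k - 1))) / Real.exp ((k:ℕ) * ΔT)) * (a * Real.exp ((k:ℕ) * ΔT)))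
      = 1 / Real.Gamma (1 - α) * ((x (t k) - x (t (k-1))) / (1 - Real.exp (-ΔT)) *
          ∫ τ in t (k-1)..t k, Real.log (t N / τ) ^ (-α) / τ)
    rw [hAint k hk.1 hk.2, hcast, show (N:ℝ) - ↑k + 1 - 1 = (N:ℝ) - ↑k from by ring, hΓeq]
    have hexpne : Real.exp ((k:ℕ) * ΔT) ≠ 0 := Real.exp_ne_zero _
    field_simp
  -- telescoping sum
  have htel : ∑ k ∈ Finset.Icc 1 N, (t k - t (k-1)) = t N - a := by
    rw [← Finset.Ico_add_one_right_eq_Icc, Finset.sum_Ico_eq_sum_range]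
    simp only [Nat.succ_sub_one, Nat.add_sub_cancel]
    have hterm : ∀ i : ℕ, t (1 + i) - t (1 + i - 1) = t (i+1) - t i := by
      intro i
      rw [show 1 + i - 1 = i from by omega, show 1 + i = i + 1 from by omega]
    rw [Finset.sum_congr rfl fun i _ => hterm i, Finset.sum_range_sub (f := t), ht0]
  -- assembling everything
  have hD : D = x a / Real.Gamma (1 - α) * Real.log (t N / a) ^ (-α)
      + (1 / Real.Gamma (1 - α)) * ∫ τ in a..(t N), Real.log (t N / τ) ^ (-α) * x' τ := rfl
  have hstep : D - x a / Real.Gamma (1 - α) * Real.log (t N / a) ^ (-α)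
      - ψ * ∑ k ∈ Finset.Icc 1 N,
          ω (N - k + 1) * ((x (t k) - x (t (k - 1))) / Real.exp (k * ΔT)) * t k
      = (1 / Real.Gamma (1 - α)) * ∑ k ∈ Finset.Icc 1 N,
          ((∫ τ in t (k-1)..t k, Real.log (t N / τ) ^ (-α) * x' τ)
            - ((x (t k) - x (t (k-1))) / (1 - Real.exp (-ΔT))) *
                ∫ τ in t (k-1)..t k, Real.log (t N / τ) ^ (-α) / τ) := by
    rw [hD, hSsum, hIsum, Finset.sum_sub_distrib]
    ring
  rw [hstep, abs_mul, abs_of_pos (div_pos one_pos hΓ1)]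
  refine le_trans (mul_le_mul_of_nonneg_left (Finset.abs_sum_le_sum_abs _ _)
    (le_of_lt (div_pos one_pos hΓ1))) ?_
  refine le_trans (mul_le_mul_of_nonneg_left (Finset.sum_le_sum
    (fun k hk => hkey k (Finset.mem_Icc.1 hk).1 (Finset.mem_Icc.1 hk).2))
    (le_of_lt (div_pos one_pos hΓ1))) ?_
  have hsum2 : ∑ k ∈ Finset.Icc 1 N, (M₁ + M₂ * b) * (t k - t (k-1)) * (ΔT ^ (1-α) / (1-α))
      = (M₁ + M₂ * b) * (ΔT ^ (1-α) / (1-α)) * (t N - a) := by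
    rw [← htel, Finset.mul_sum]
    exact Finset.sum_congr rfl fun k _ => by ring
  rw [hsum2]
  have htNa : t N - a ≤ b - a := by linarith [htb hNn]
  have htNa0 : 0 ≤ t N - a := by linarith [hta N]
  have hP : 0 ≤ ΔT ^ (1 - α) := Real.rpow_nonneg hΔT.le _
  have hMM : 0 ≤ M₁ + M₂ * b := add_nonneg hM1n (mul_nonneg hM2n hb.le)
  have hM2b : 0 ≤ M₂ * b := mul_nonneg hM2n hb.le
  have heq2 : (1 / Real.Gamma (1 - α)) * ((M₁ + M₂ * b) * (ΔT ^ (1-α) / (1-α)) * (t N - a))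
      = (M₁ + M₂ * b) / Real.Gamma (2 - α) * (t N - a) * ΔT ^ (1-α) := by
    rw [hΓeq]
    field_simp
  rw [heq2]
  refine mul_le_mul_of_nonneg_right ?_ hP
  refine mul_le_mul ?_ htNa htNa0 ?_
  · apply div_le_div_of_nonneg_right ?_ hΓ2.le
    · linarith
  · apply div_nonneg ?_ hΓ2.le
    linarith
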